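/- Residual of a transition and a coinitial braiding congruence: suppose E : P ⟶a R is a transition and φ : P ≅ P' is a braiding congruence. Then there exist a process R', a transition E/φ : P' ⟶a R' with the same action a, and a braiding congruence φ/E : R ≅ R', so that the square formed by E, φ, E/φ and φ/E commutes. -/

import Mathlib

/-- Contexts are natural numbers; names in context `Γ` are de Bruijn indices below `Γ`. -/
abbrev Name (Γ : ℕ) : Type := Fin Γ

/-- The renaming `push : Fin Γ → Fin (Γ+1)` sends `x` to `x+1`, freeing the index `0`. -/
def push {Γ : ℕ} (x : Name Γ) : Name (Γ + 1) := x.succ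

/-- For `y : Fin Γ`, the renaming `pop y : Fin (Γ+1) → Fin Γ` sends `0` to `y` and `x+1` to `x`. -/
def pop {Γ : ℕ} (y : Name Γ) : Name (Γ + 1) → Name Γ
  | ⟨0, _⟩ => y
  | ⟨x + 1, h⟩ => ⟨x, Nat.lt_of_succ_lt_succ h⟩

/-- The renaming `swap : Fin (Γ+2) → Fin (Γ+2)` sends `0` to `1`, `1` to `0` and `x+2` to itself. -/
def swap {Γ : ℕ} : Name (Γ + 2) → Name (Γ + 2)
  | ⟨0, _⟩ => ⟨1, by omega⟩
  | ⟨1, _⟩ => ⟨0, by omega⟩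
  | ⟨x + 2, h⟩ => ⟨x + 2, h⟩

/-- The lift `suc ρ : Fin (Γ+1) → Fin (Δ+1)` of a renaming `ρ : Fin Γ → Fin Δ` sends
`0` to `0` and `x+1` to `(ρ x)+1`. -/
def sucR {Γ Δ : ℕ} (ρ : Name Γ → Name Δ) : Name (Γ + 1) → Name (Δ + 1)
  | ⟨0, _⟩ => ⟨0, Nat.succ_pos Δ⟩
  | ⟨x + 1, h⟩ => (ρ ⟨x, Nat.lt_of_succ_lt_succ h⟩).succ

-- defeq tests
/-- Processes over the context `Γ`, in de Bruijn form. -/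
inductive Proc : ℕ → Type where
  /-- The inactive process `0`. -/
  | nil : {Γ : ℕ} → Proc Γ
  /-- Input prefix `x.P` (binding one name). -/
  | input : {Γ : ℕ} → Name Γ → Proc (Γ + 1) → Proc Γ
  /-- Output prefix `x⟨y⟩.P`. -/
  | output : {Γ : ℕ} → Name Γ → Name Γ → Proc Γ → Proc Γ
  /-- Choice `P + Q`. -/
  | choice : {Γ : ℕ} → Proc Γ → Proc Γ → Proc Γ
  /-- Parallel composition `P ∣ Q`. -/
  | par : {Γ : ℕ} → Proc Γ → Proc Γ → Proc Γ
  /-- Restriction `ν P` (binding one name). -/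
  | nu : {Γ : ℕ} → Proc (Γ + 1) → Proc Γ
  /-- Replication `!P`. -/
  | rep : {Γ : ℕ} → Proc Γ → Proc Γ

/-- The functorial extension of a renaming to processes, going under the binders of
input and restriction via the lift `sucR`. -/
def Proc.rename : {Γ Δ : ℕ} → (Name Γ → Name Δ) → Proc Γ → Proc Δ
  | _, _, _, .nil => .nil
  | _, _, ρ, .input x P => .input (ρ x) (P.rename (sucR ρ))
  | _, _, ρ, .output x y P => .output (ρ x) (ρ y) (P.rename ρ)
  | _, _, ρ, .choice P Q => .choice (P.rename ρ) (Q.rename ρ)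
  | _, _, ρ, .par P Q => .par (P.rename ρ) (Q.rename ρ)
  | _, _, ρ, .nu P => .nu (P.rename (sucR ρ))
  | _, _, ρ, .rep P => .rep (P.rename ρ)
/-- Actions are either *bound* (input and bound output, whose target context gains a
fresh name) or *non-bound* (output and silent, whose target context is unchanged). -/
inductive ActTy : Type where
  | bound : ActTy
  | nonbound : ActTy

/-- The target context of an action of the given kind performed in context `Γ`. -/
@[reducible] def ActTy.tgt : ActTy → ℕ → ℕ
  | .bound, Γ => Γ + 1
  | .nonbound, Γ => Γ

/-- Actions over the context `Γ`. -/
inductive Act : ActTy → ℕ → Type where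
  /-- Input `x`. -/
  | inp : {Γ : ℕ} → Name Γ → Act .bound Γ
  /-- Bound output `x⟨ν⟩` (output of a name whose scope is being extruded). -/
  | bout : {Γ : ℕ} → Name Γ → Act .bound Γ
  /-- Output `x⟨y⟩`. -/
  | out : {Γ : ℕ} → Name Γ → Name Γ → Act .nonbound Γ
  /-- Silent action `τ`. -/
  | tau : {Γ : ℕ} → Act .nonbound Γ

/-- The extension of a renaming to actions. -/
def Act.rename {Γ Δ : ℕ} (ρ : Name Γ → Name Δ) : {ty : ActTy} → Act ty Γ → Act ty Δ
  | _, .inp x => .inp (ρ x)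
  | _, .bout x => .bout (ρ x)
  | _, .out x y => .out (ρ x) (ρ y)
  | _, .tau => .tau

/-- The residual `ρ/a` of a renaming `ρ` after an action of kind `ty`:
`suc ρ` if the action is bound and `ρ` itself otherwise. -/
def resRen : (ty : ActTy) → {Γ Δ : ℕ} → (Name Γ → Name Δ) → Name (ty.tgt Γ) → Name (ty.tgt Δ)
  | .bound, _, _, ρ => sucR ρ
  | .nonbound, _, _, ρ => ρ
/-- The labelled transition relation, in proof-relevant form: an element of
`Tr P a R` is a derivation (a "proved transition") of `P ⟶a R`. -/
inductive Tr : {Γ : ℕ} → {ty : ActTy} → Proc Γ → Act ty Γ → Proc (ActTy.tgt ty Γ) → Type where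
  /-- `x.P  ⟶x  P`. -/
  | inp : {Γ : ℕ} → (x : Name Γ) → (P : Proc (Γ + 1)) →
      Tr (.input x P) (.inp x) P
  /-- `x⟨y⟩.P  ⟶x⟨y⟩  P`. -/
  | out : {Γ : ℕ} → (x y : Name Γ) → (P : Proc Γ) →
      Tr (.output x y P) (.out x y) P
  /-- Choose the left branch. -/
  | sumL : {Γ : ℕ} → {ty : ActTy} → {P : Proc Γ} → (Q : Proc Γ) → {a : Act ty Γ} →
      {R : Proc (ActTy.tgt ty Γ)} → Tr P a R → Tr (.choice P Q) a R
  /-- Choose the right branch. -/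
  | sumR : {Γ : ℕ} → {ty : ActTy} → (P : Proc Γ) → {Q : Proc Γ} → {a : Act ty Γ} →
      {R : Proc (ActTy.tgt ty Γ)} → Tr Q a R → Tr (.choice P Q) a R
  /-- Propagate a non-bound action through a parallel composition on the left. -/
  | parLC : {Γ : ℕ} → {P : Proc Γ} → (Q : Proc Γ) → {c : Act .nonbound Γ} → {R : Proc Γ} →
      Tr P c R → Tr (.par P Q) c (.par R Q)
  /-- Propagate a bound action through a parallel composition on the left,
  reserving the fresh name `0` in the passive component via `push`. -/
  | parLB : {Γ : ℕ} → {P : Proc Γ} → (Q : Proc Γ) → {b : Act .bound Γ} → {R : Proc (Γ + 1)} →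
      Tr P b R → Tr (.par P Q) b (.par R (Q.rename push))
  /-- Propagate a non-bound action through a parallel composition on the right. -/
  | parRC : {Γ : ℕ} → (P : Proc Γ) → {Q : Proc Γ} → {c : Act .nonbound Γ} → {S : Proc Γ} →
      Tr Q c S → Tr (.par P Q) c (.par P S)
  /-- Propagate a bound action through a parallel composition on the right. -/
  | parRB : {Γ : ℕ} → (P : Proc Γ) → {Q : Proc Γ} → {b : Act .bound Γ} → {S : Proc (Γ + 1)} →
      Tr Q b S → Tr (.par P Q) b (.par (P.rename push) S)
  /-- Communication rendezvous, receiving `y` on the left. -/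
  | comL : {Γ : ℕ} → {P Q : Proc Γ} → {x y : Name Γ} → {R : Proc (Γ + 1)} → {S : Proc Γ} →
      Tr P (.inp x) R → Tr Q (.out x y) S →
      Tr (.par P Q) .tau (.par (R.rename (pop y)) S)
  /-- Communication rendezvous, receiving `y` on the right. -/
  | comR : {Γ : ℕ} → {P Q : Proc Γ} → {x y : Name Γ} → {R : Proc Γ} → {S : Proc (Γ + 1)} →
      Tr P (.out x y) R → Tr Q (.inp x) S →
      Tr (.par P Q) .tau (.par R (S.rename (pop y)))
  /-- Initiate extrusion of the scope of a `ν`-binder: an output `(x+1)⟨0⟩` under the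
  binder becomes a bound output `x⟨ν⟩`. -/
  | extrude : {Γ : ℕ} → {P : Proc (Γ + 1)} → {x : Name Γ} → {R : Proc (Γ + 1)} →
      Tr P (.out (push x) 0) R → Tr (.nu P) (.bout x) R
  /-- Extrusion rendezvous ("close"), receiving the extruded name `0` on the left. -/
  | closeL : {Γ : ℕ} → {P Q : Proc Γ} → {x : Name Γ} → {R S : Proc (Γ + 1)} →
      Tr P (.inp x) R → Tr Q (.bout x) S →
      Tr (.par P Q) .tau (.nu (.par R S))
  /-- Extrusion rendezvous ("close"), receiving the extruded name `0` on the right. -/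
  | closeR : {Γ : ℕ} → {P Q : Proc Γ} → {x : Name Γ} → {R S : Proc (Γ + 1)} →
      Tr P (.bout x) R → Tr Q (.inp x) S →
      Tr (.par P Q) .tau (.nu (.par R S))
  /-- Propagate a non-bound action of the form `push* c` through a `ν`-binder. -/
  | nuC : {Γ : ℕ} → {P : Proc (Γ + 1)} → {c : Act .nonbound Γ} → {R : Proc (Γ + 1)} →
      Tr P (c.rename push) R → Tr (.nu P) c (.nu R)
  /-- Propagate a bound action of the form `push* b` through a `ν`-binder,
  rewiring the target with the braid `swap`. -/
  | nuB : {Γ : ℕ} → {P : Proc (Γ + 1)} → {b : Act .bound Γ} → {R : Proc (Γ + 2)} →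
      Tr P (b.rename push) R → Tr (.nu P) b (.nu (R.rename swap))
  /-- Replication. -/
  | rep : {Γ : ℕ} → {ty : ActTy} → {P : Proc Γ} → {a : Act ty Γ} → {R : Proc (ActTy.tgt ty Γ)} →
      Tr (.par P (.rep P)) a R → Tr (.rep P) a R
/-- Braiding congruence `P ≅ Q`: the congruence on processes generated by the braidings
`ν ν (swap* P) ≅ ν ν P` and `ν ν P ≅ ν ν (swap* P)`, transitivity, and closure under
all process constructors. -/
inductive BC : {Γ : ℕ} → Proc Γ → Proc Γ → Type where
  /-- `ν ν (swap* P) ≅ ν ν P`. -/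
  | nuSwap : {Γ : ℕ} → (P : Proc (Γ + 2)) → BC (.nu (.nu (P.rename swap))) (.nu (.nu P))
  /-- `ν ν P ≅ ν ν (swap* P)`. -/
  | nuSwapInv : {Γ : ℕ} → (P : Proc (Γ + 2)) → BC (.nu (.nu P)) (.nu (.nu (P.rename swap)))
  /-- Transitivity. -/
  | trans : {Γ : ℕ} → {P R S : Proc Γ} → BC P R → BC R S → BC P S
  /-- `0 ≅ 0`. -/
  | nil : {Γ : ℕ} → BC (Proc.nil : Proc Γ) .nil
  /-- Compatibility with input prefix. -/
  | input : {Γ : ℕ} → (x : Name Γ) → {P R : Proc (Γ + 1)} → BC P R →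
      BC (.input x P) (.input x R)
  /-- Compatibility with output prefix. -/
  | output : {Γ : ℕ} → (x y : Name Γ) → {P R : Proc Γ} → BC P R →
      BC (.output x y P) (.output x y R)
  /-- Compatibility with choice. -/
  | choice : {Γ : ℕ} → {P R Q S : Proc Γ} → BC P R → BC Q S →
      BC (.choice P Q) (.choice R S)
  /-- Compatibility with parallel composition. -/
  | par : {Γ : ℕ} → {P R Q S : Proc Γ} → BC P R → BC Q S →
      BC (.par P Q) (.par R S)
  /-- Compatibility with restriction. -/
  | nu : {Γ : ℕ} → {P R : Proc (Γ + 1)} → BC P R → BC (.nu P) (.nu R)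
  /-- Compatibility with replication. -/
  | rep : {Γ : ℕ} → {P R : Proc Γ} → BC P R → BC (.rep P) (.rep R)

-- name lemmas
theorem swap_swap {Γ} (x : Name (Γ+2)) : swap (swap x) = x := by
  rcases x with ⟨x, h⟩
  match x with
  | 0 => rfl
  | 1 => rfl
  | n+2 => rfl

theorem sucR_push {Γ Δ} (ρ : Name Γ → Name Δ) (x : Name Γ) :
    sucR ρ (push x) = push (ρ x) := rfl

theorem sucR_zero {Γ Δ} (ρ : Name Γ → Name Δ) : sucR ρ 0 = 0 := by
  have : (0 : Name (Γ+1)) = ⟨0, Nat.succ_pos _⟩ := by ext; simp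
  rw [this]
  ext; simp [sucR]

theorem pop_sucR {Γ Δ} (ρ : Name Γ → Name Δ) (y : Name Γ) (x : Name (Γ+1)) :
    pop (ρ y) (sucR ρ x) = ρ (pop y x) := by
  rcases x with ⟨x, h⟩
  match x with
  | 0 => rfl
  | n+1 => rfl

theorem swap_sucR_sucR {Γ Δ} (ρ : Name Γ → Name Δ) (x : Name (Γ+2)) :
    swap (sucR (sucR ρ) x) = sucR (sucR ρ) (swap x) := by
  rcases x with ⟨x, h⟩
  match x with
  | 0 => rfl
  | 1 => rfl
  | n+2 => rfl

theorem swap_push_push {Γ} (x : Name Γ) :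
    swap (push (push x)) = push (push x) := rfl

-- Yang-Baxter: sucR swap ∘ swap ∘ sucR swap = swap ∘ sucR swap ∘ swap on Fin (Γ+3)
theorem braid {Γ} (x : Name (Γ+3)) :
    sucR swap (swap (sucR swap x)) = swap (sucR swap (swap x)) := by
  rcases x with ⟨x, h⟩
  match x with
  | 0 => rfl
  | 1 => rfl
  | 2 => rfl
  | n+3 => rfl
theorem Proc.rename_ext {Γ Δ} {ρ σ : Name Γ → Name Δ} (h : ∀ x, ρ x = σ x) (P : Proc Γ) :
    P.rename ρ = P.rename σ := by
  have : ρ = σ := funext h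
  rw [this]

theorem sucR_comp {Γ Δ Θ} (ρ : Name Γ → Name Δ) (σ : Name Δ → Name Θ) (x : Name (Γ+1)) :
    sucR σ (sucR ρ x) = sucR (fun y => σ (ρ y)) x := by
  rcases x with ⟨x, h⟩
  match x with
  | 0 => rfl
  | n+1 => rfl

theorem Proc.rename_comp {Γ Δ Θ} (ρ : Name Γ → Name Δ) (σ : Name Δ → Name Θ) (P : Proc Γ) :
    (P.rename ρ).rename σ = P.rename (fun x => σ (ρ x)) := by
  induction P generalizing Δ Θ with
  | nil => rfl
  | input x P ih =>
      simp only [Proc.rename, ih]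
      exact congrArg _ (Proc.rename_ext (sucR_comp ρ σ) P)
  | output x y P ih => simp only [Proc.rename, ih]
  | choice P Q ihP ihQ => simp only [Proc.rename, ihP, ihQ]
  | par P Q ihP ihQ => simp only [Proc.rename, ihP, ihQ]
  | nu P ih =>
      simp only [Proc.rename, ih]
      exact congrArg _ (Proc.rename_ext (sucR_comp ρ σ) P)
  | rep P ih => simp only [Proc.rename, ih]

theorem sucR_id {Γ} (x : Name (Γ+1)) : sucR (fun y => y) x = x := by
  rcases x with ⟨x, h⟩
  match x with
  | 0 => rfl
  | n+1 => rfl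

theorem Proc.rename_id {Γ} (P : Proc Γ) : P.rename (fun x => x) = P := by
  induction P with
  | nil => rfl
  | input x P ih => simp only [Proc.rename]; rw [Proc.rename_ext sucR_id P, ih]
  | output x y P ih => simp only [Proc.rename, ih]
  | choice P Q ihP ihQ => simp only [Proc.rename, ihP, ihQ]
  | par P Q ihP ihQ => simp only [Proc.rename, ihP, ihQ]
  | nu P ih => simp only [Proc.rename]; rw [Proc.rename_ext sucR_id P, ih]
  | rep P ih => simp only [Proc.rename, ih]

theorem Proc.rename_swap_swap {Γ} (P : Proc (Γ+2)) :
    (P.rename swap).rename swap = P := by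
  rw [Proc.rename_comp, Proc.rename_ext swap_swap P, Proc.rename_id]
def Tr.renameTr : ∀ {Γ Δ ty} (ρ : Name Γ → Name Δ) {P : Proc Γ} {a : Act ty Γ}
    {R : Proc (ActTy.tgt ty Γ)}, Tr P a R →
    Tr (P.rename ρ) (a.rename ρ) (R.rename (resRen ty ρ))
  | _, _, _, ρ, _, _, _, .inp x P => .inp (ρ x) (P.rename (sucR ρ))
  | _, _, _, ρ, _, _, _, .out x y P => .out (ρ x) (ρ y) (P.rename ρ)
  | _, _, _, ρ, _, _, _, .sumL Q E => .sumL (Q.rename ρ) (E.renameTr ρ)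
  | _, _, _, ρ, _, _, _, .sumR P E => .sumR (P.rename ρ) (E.renameTr ρ)
  | _, _, _, ρ, _, _, _, .parLC Q E => .parLC (Q.rename ρ) (E.renameTr ρ)
  | _, _, _, ρ, _, _, _, .parRC P E => .parRC (P.rename ρ) (E.renameTr ρ)
  | _, _, _, ρ, _, _, _, .parLB Q E => by
      have h := Tr.parLB (b := _) (Q.rename ρ) (E.renameTr ρ)
      have e : (Q.rename ρ).rename push = (Q.rename push).rename (sucR ρ) := by
        rw [Proc.rename_comp, Proc.rename_comp]
        exact (Proc.rename_ext (fun x => rfl) Q).symm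
      simp only [resRen] at h ⊢
      rw [e] at h
      exact h
  | _, _, _, ρ, _, _, _, .parRB P E => by
      have h := Tr.parRB (b := _) (P.rename ρ) (E.renameTr ρ)
      have e : (P.rename ρ).rename push = (P.rename push).rename (sucR ρ) := by
        rw [Proc.rename_comp, Proc.rename_comp]
        exact (Proc.rename_ext (fun x => rfl) P).symm
      simp only [resRen] at h ⊢
      rw [e] at h
      exact h
  | _, _, _, ρ, _, _, _, .comL (y := y) (R := R) E F => by
      have h := Tr.comL (E.renameTr ρ) (F.renameTr ρ)
      have e : (R.rename (sucR ρ)).rename (pop (ρ y)) = (R.rename (pop y)).rename ρ := by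
        rw [Proc.rename_comp, Proc.rename_comp]
        exact Proc.rename_ext (pop_sucR ρ y) R
      simp only [resRen] at h ⊢
      rw [e] at h
      exact h
  | _, _, _, ρ, _, _, _, .comR (y := y) (S := S) E F => by
      have h := Tr.comR (E.renameTr ρ) (F.renameTr ρ)
      have e : (S.rename (sucR ρ)).rename (pop (ρ y)) = (S.rename (pop y)).rename ρ := by
        rw [Proc.rename_comp, Proc.rename_comp]
        exact Proc.rename_ext (pop_sucR ρ y) S
      simp only [resRen] at h ⊢
      rw [e] at h
      exact h
  | _, _, _, ρ, _, _, _, .extrude (x := x) E => by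
      have h := E.renameTr (sucR ρ)
      have e : (Act.out (push x) 0).rename (sucR ρ) = .out (push (ρ x)) 0 := by
        simp only [Act.rename, sucR_push, sucR_zero]
      rw [e] at h
      exact Tr.extrude h
  | _, _, _, ρ, _, _, _, .closeL E F => .closeL (E.renameTr ρ) (F.renameTr ρ)
  | _, _, _, ρ, _, _, _, .closeR E F => .closeR (E.renameTr ρ) (F.renameTr ρ)
  | _, _, _, ρ, _, _, _, .nuC (c := c) E => by
      have h := E.renameTr (sucR ρ)
      have e : (c.rename push).rename (sucR ρ) = (c.rename ρ).rename push := by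
        cases c <;> simp only [Act.rename, sucR_push]
      rw [e] at h
      exact Tr.nuC h
  | _, _, _, ρ, _, _, _, .nuB (b := b) (R := R) E => by
      have h := E.renameTr (sucR ρ)
      have e : (b.rename push).rename (sucR ρ) = (b.rename ρ).rename push := by
        cases b <;> simp only [Act.rename, sucR_push]
      rw [e] at h
      have h2 := Tr.nuB h
      have e2 : (R.rename (sucR (sucR ρ))).rename swap = (R.rename swap).rename (sucR (sucR ρ)) := by
        rw [Proc.rename_comp, Proc.rename_comp]
        exact Proc.rename_ext (swap_sucR_sucR ρ) R
      simp only [resRen] at h2 ⊢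
      rw [e2] at h2
      exact h2
  | _, _, _, ρ, _, _, _, .rep E => .rep (E.renameTr ρ)
/-- One-step braiding congruence (no transitivity), as a Prop. -/
inductive BC1 : {Γ : ℕ} → Proc Γ → Proc Γ → Prop where
  | nuSwap : {Γ : ℕ} → (P : Proc (Γ + 2)) → BC1 (.nu (.nu (P.rename swap))) (.nu (.nu P))
  | nuSwapInv : {Γ : ℕ} → (P : Proc (Γ + 2)) → BC1 (.nu (.nu P)) (.nu (.nu (P.rename swap)))
  | nil : {Γ : ℕ} → BC1 (Proc.nil : Proc Γ) .nil
  | input : {Γ : ℕ} → (x : Name Γ) → {P R : Proc (Γ + 1)} → BC1 P R →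
      BC1 (.input x P) (.input x R)
  | output : {Γ : ℕ} → (x y : Name Γ) → {P R : Proc Γ} → BC1 P R →
      BC1 (.output x y P) (.output x y R)
  | choice : {Γ : ℕ} → {P R Q S : Proc Γ} → BC1 P R → BC1 Q S →
      BC1 (.choice P Q) (.choice R S)
  | par : {Γ : ℕ} → {P R Q S : Proc Γ} → BC1 P R → BC1 Q S →
      BC1 (.par P Q) (.par R S)
  | nu : {Γ : ℕ} → {P R : Proc (Γ + 1)} → BC1 P R → BC1 (.nu P) (.nu R)
  | rep : {Γ : ℕ} → {P R : Proc Γ} → BC1 P R → BC1 (.rep P) (.rep R)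

theorem BC1.refl : ∀ {Γ} (P : Proc Γ), BC1 P P
  | _, .nil => .nil
  | _, .input x P => .input x (BC1.refl P)
  | _, .output x y P => .output x y (BC1.refl P)
  | _, .choice P Q => .choice (BC1.refl P) (BC1.refl Q)
  | _, .par P Q => .par (BC1.refl P) (BC1.refl Q)
  | _, .nu P => .nu (BC1.refl P)
  | _, .rep P => .rep (BC1.refl P)

theorem BC1.renameBC {Γ Δ} (ρ : Name Γ → Name Δ) {P Q : Proc Γ} (φ : BC1 P Q) :
    BC1 (P.rename ρ) (Q.rename ρ) := by
  induction φ generalizing Δ with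
  | nuSwap P =>
      simp only [Proc.rename]
      have e : (P.rename swap).rename (sucR (sucR ρ)) =
          (P.rename (sucR (sucR ρ))).rename swap := by
        rw [Proc.rename_comp, Proc.rename_comp]
        exact (Proc.rename_ext (fun x => swap_sucR_sucR ρ x) P).symm
      rw [e]
      exact BC1.nuSwap _
  | nuSwapInv P =>
      simp only [Proc.rename]
      have e : (P.rename swap).rename (sucR (sucR ρ)) =
          (P.rename (sucR (sucR ρ))).rename swap := by
        rw [Proc.rename_comp, Proc.rename_comp]
        exact (Proc.rename_ext (fun x => swap_sucR_sucR ρ x) P).symm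
      rw [e]
      exact BC1.nuSwapInv _
  | nil => exact .nil
  | input x _ ih => exact .input _ (ih (sucR ρ))
  | output x y _ ih => exact .output _ _ (ih ρ)
  | choice _ _ ih1 ih2 => exact .choice (ih1 ρ) (ih2 ρ)
  | par _ _ ih1 ih2 => exact .par (ih1 ρ) (ih2 ρ)
  | nu _ ih => exact .nu (ih (sucR ρ))
  | rep _ ih => exact .rep (ih ρ)

theorem BC.ofBC1 {Γ} {P Q : Proc Γ} (φ : BC1 P Q) : Nonempty (BC P Q) := by
  induction φ with
  | nuSwap P => exact ⟨.nuSwap P⟩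
  | nuSwapInv P => exact ⟨.nuSwapInv P⟩
  | nil => exact ⟨.nil⟩
  | input x _ ih => exact ⟨.input x ih.some⟩
  | output x y _ ih => exact ⟨.output x y ih.some⟩
  | choice _ _ ih1 ih2 => exact ⟨.choice ih1.some ih2.some⟩
  | par _ _ ih1 ih2 => exact ⟨.par ih1.some ih2.some⟩
  | nu _ ih => exact ⟨.nu ih.some⟩
  | rep _ ih => exact ⟨.rep ih.some⟩

theorem BC.refl : ∀ {Γ} (P : Proc Γ), Nonempty (BC P P)
  | _, .nil => ⟨.nil⟩
  | _, .input x P => ⟨.input x (BC.refl P).some⟩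
  | _, .output x y P => ⟨.output x y (BC.refl P).some⟩
  | _, .choice P Q => ⟨.choice (BC.refl P).some (BC.refl Q).some⟩
  | _, .par P Q => ⟨.par (BC.refl P).some (BC.refl Q).some⟩
  | _, .nu P => ⟨.nu (BC.refl P).some⟩
  | _, .rep P => ⟨.rep (BC.refl P).some⟩

open Relation in
theorem BC.ofChain {Γ} {P Q : Proc Γ} (h : ReflTransGen BC1 P Q) : Nonempty (BC P Q) := by
  induction h with
  | refl => exact BC.refl P
  | tail _ step ih => exact ⟨.trans ih.some (BC.ofBC1 step).some⟩

open Relation in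
theorem chain_of_BC {Γ} {P Q : Proc Γ} (φ : BC P Q) : ReflTransGen BC1 P Q := by
  induction φ with
  | nuSwap P => exact ReflTransGen.single (.nuSwap P)
  | nuSwapInv P => exact ReflTransGen.single (.nuSwapInv P)
  | trans _ _ ih1 ih2 => exact ih1.trans ih2
  | nil => exact ReflTransGen.refl
  | input x _ ih => exact ih.lift (Proc.input x) (fun _ _ h => .input x h)
  | output x y _ ih => exact ih.lift (Proc.output x y) (fun _ _ h => .output x y h)
  | @choice Γ P R Q S _ _ ih1 ih2 =>
      exact ReflTransGen.trans
        (ReflTransGen.lift (fun X : Proc Γ => X.choice Q) (fun _ _ h => BC1.choice h (BC1.refl Q)) _ _ ih1)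
        (ReflTransGen.lift (fun X : Proc Γ => R.choice X) (fun _ _ h => BC1.choice (BC1.refl R) h) _ _ ih2)
  | @par Γ P R Q S _ _ ih1 ih2 =>
      exact ReflTransGen.trans
        (ReflTransGen.lift (fun X : Proc Γ => X.par Q) (fun _ _ h => BC1.par h (BC1.refl Q)) _ _ ih1)
        (ReflTransGen.lift (fun X : Proc Γ => R.par X) (fun _ _ h => BC1.par (BC1.refl R) h) _ _ ih2)
  | nu _ ih => exact ih.lift Proc.nu (fun _ _ h => .nu h)
  | rep _ ih => exact ih.lift Proc.rep (fun _ _ h => .rep h)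
theorem swap_zero {Γ} : swap (0 : Name (Γ+2)) = push 0 := by
  have h0 : (0 : Name (Γ+2)) = ⟨0, by omega⟩ := by ext; simp
  have h1 : push (0 : Name (Γ+1)) = ⟨1, by omega⟩ := by ext; simp [push]
  rw [h0, h1]; rfl

theorem swap_push_zero {Γ} : swap (push (0 : Name (Γ+1))) = 0 := by
  have h1 : push (0 : Name (Γ+1)) = ⟨1, by omega⟩ := by ext; simp [push]
  have h0 : (0 : Name (Γ+2)) = ⟨0, by omega⟩ := by ext; simp
  rw [h1, h0]; rfl

theorem act_swap_pushpush {Γ ty} (a : Act ty Γ) :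
    ((a.rename push).rename push).rename swap = (a.rename push).rename push := by
  cases a <;> simp only [Act.rename, swap_push_push]

theorem braid2 {Γ} (x : Name (Γ+3)) :
    swap (sucR swap (swap (sucR swap x))) = sucR swap (swap x) := by
  rcases x with ⟨x, h⟩
  match x with
  | 0 => rfl
  | 1 => rfl
  | 2 => rfl
  | n+3 => rfl

theorem coreNuB {Γ} {Q : Proc (Γ+2)} (b : Act .bound Γ) {R2 : Proc (Γ+1+2)}
    (E2 : Tr (Q.rename swap) ((b.rename push).rename push) R2) :
    ∃ R', Nonempty (Tr (Proc.nu (.nu Q)) b R') ∧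
      BC1 (Proc.nu (Proc.rename swap (Proc.nu (Proc.rename swap R2)))) R' := by
  have h := E2.renameTr swap
  rw [Proc.rename_swap_swap, act_swap_pushpush] at h
  simp only [resRen] at h
  have h2 := Tr.nuB (Tr.nuB h)
  refine ⟨_, ⟨h2⟩, ?_⟩
  simp only [Proc.rename]
  rw [Proc.rename_comp, Proc.rename_comp, Proc.rename_comp]
  have e1 : Proc.rename (fun x => sucR swap (swap x)) R2
      = (Proc.rename (fun x => sucR swap (swap (sucR swap x))) R2).rename swap := by
    rw [Proc.rename_comp]
    exact Proc.rename_ext (fun x => (braid2 x).symm) R2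
  rw [e1]
  exact BC1.nuSwap _

/-- Core case: residual of a transition from `ν ν (swap* Q)` along the braid to `ν ν Q`. -/
theorem core {Γ ty} {Q : Proc (Γ+2)} {a : Act ty Γ} {R : Proc (ActTy.tgt ty Γ)}
    (E : Tr (.nu (.nu (Q.rename swap))) a R) :
    ∃ R', Nonempty (Tr (.nu (.nu Q)) a R') ∧ BC1 R R' := by
  cases E with
  | extrude E1 =>
    cases E1 with
    | nuC E2 =>
      rename_i x R0
      have h := E2.renameTr swap
      rw [Proc.rename_swap_swap] at h
      have ea : (Act.rename swap (Act.rename push (Act.out (push x) 0)))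
          = Act.out (push (push x)) 0 := by
        simp only [Act.rename, swap_push_push, swap_push_zero]
      rw [ea] at h
      simp only [resRen] at h
      have h2 := Tr.nuB (b := .bout x) (Tr.extrude h)
      rw [Proc.rename_swap_swap] at h2
      exact ⟨_, ⟨h2⟩, BC1.refl _⟩
  | nuC E1 =>
    cases E1 with
    | nuC E2 =>
      have h := E2.renameTr swap
      rw [Proc.rename_swap_swap, act_swap_pushpush] at h
      simp only [resRen] at h
      refine ⟨_, ⟨Tr.nuC (Tr.nuC h)⟩, ?_⟩
      exact BC1.nuSwapInv _
  | nuB E1 =>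
    rename_i b R1
    cases b with
    | inp x =>
      cases E1 with
      | nuB E2 => exact coreNuB (.inp x) E2
    | bout x =>
      cases E1 with
      | extrude E2 =>
        have h := E2.renameTr swap
        rw [Proc.rename_swap_swap] at h
        have ea : (Act.rename swap (Act.out (push (push x)) 0))
            = Act.rename push (Act.out (push x) 0) := by
          simp only [Act.rename, swap_push_push, swap_zero]
        rw [ea] at h
        simp only [resRen] at h
        exact ⟨_, ⟨Tr.extrude (Tr.nuC h)⟩, BC1.refl _⟩
      | nuB E2 => exact coreNuB (.bout x) E2
theorem coreInv {Γ ty} {Q : Proc (Γ+2)} {a : Act ty Γ} {R : Proc (ActTy.tgt ty Γ)}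
    (E : Tr (.nu (.nu Q)) a R) :
    ∃ R', Nonempty (Tr (.nu (.nu (Q.rename swap))) a R') ∧ BC1 R R' := by
  have e : Proc.nu (.nu Q) = .nu (.nu ((Q.rename swap).rename swap)) := by
    rw [Proc.rename_swap_swap]
  rw [e] at E
  exact core E

theorem resBC1 {Γ ty} {P : Proc Γ} {a : Act ty Γ} {R : Proc (ActTy.tgt ty Γ)}
    (E : Tr P a R) {P' : Proc Γ} (φ : BC1 P P') :
    ∃ R', Nonempty (Tr P' a R') ∧ BC1 R R' := by
  induction E with
  | inp x P =>
    cases φ with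
    | input x ψ => exact ⟨_, ⟨.inp x _⟩, ψ⟩
  | out x y P =>
    cases φ with
    | output x y ψ => exact ⟨_, ⟨.out x y _⟩, ψ⟩
  | sumL Q E1 ih =>
    cases φ with
    | choice ψ1 ψ2 =>
      obtain ⟨R', ⟨E'⟩, χ⟩ := ih ψ1
      exact ⟨R', ⟨.sumL _ E'⟩, χ⟩
  | sumR P E1 ih =>
    cases φ with
    | choice ψ1 ψ2 =>
      obtain ⟨R', ⟨E'⟩, χ⟩ := ih ψ2
      exact ⟨R', ⟨.sumR _ E'⟩, χ⟩
  | parLC Q E1 ih =>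
    cases φ with
    | par ψ1 ψ2 =>
      obtain ⟨R', ⟨E'⟩, χ⟩ := ih ψ1
      exact ⟨_, ⟨.parLC _ E'⟩, .par χ ψ2⟩
  | parLB Q E1 ih =>
    cases φ with
    | par ψ1 ψ2 =>
      obtain ⟨R', ⟨E'⟩, χ⟩ := ih ψ1
      exact ⟨_, ⟨.parLB _ E'⟩, .par χ (ψ2.renameBC push)⟩
  | parRC P E1 ih =>
    cases φ with
    | par ψ1 ψ2 =>
      obtain ⟨R', ⟨E'⟩, χ⟩ := ih ψ2
      exact ⟨_, ⟨.parRC _ E'⟩, .par ψ1 χ⟩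
  | parRB P E1 ih =>
    cases φ with
    | par ψ1 ψ2 =>
      obtain ⟨R', ⟨E'⟩, χ⟩ := ih ψ2
      exact ⟨_, ⟨.parRB _ E'⟩, .par (ψ1.renameBC push) χ⟩
  | comL E1 E2 ih1 ih2 =>
    cases φ with
    | par ψ1 ψ2 =>
      obtain ⟨R', ⟨E1'⟩, χ1⟩ := ih1 ψ1
      obtain ⟨S', ⟨E2'⟩, χ2⟩ := ih2 ψ2
      exact ⟨_, ⟨.comL E1' E2'⟩, .par (χ1.renameBC _) χ2⟩
  | comR E1 E2 ih1 ih2 =>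
    cases φ with
    | par ψ1 ψ2 =>
      obtain ⟨R', ⟨E1'⟩, χ1⟩ := ih1 ψ1
      obtain ⟨S', ⟨E2'⟩, χ2⟩ := ih2 ψ2
      exact ⟨_, ⟨.comR E1' E2'⟩, .par χ1 (χ2.renameBC _)⟩
  | closeL E1 E2 ih1 ih2 =>
    cases φ with
    | par ψ1 ψ2 =>
      obtain ⟨R', ⟨E1'⟩, χ1⟩ := ih1 ψ1
      obtain ⟨S', ⟨E2'⟩, χ2⟩ := ih2 ψ2
      exact ⟨_, ⟨.closeL E1' E2'⟩, .nu (.par χ1 χ2)⟩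
  | closeR E1 E2 ih1 ih2 =>
    cases φ with
    | par ψ1 ψ2 =>
      obtain ⟨R', ⟨E1'⟩, χ1⟩ := ih1 ψ1
      obtain ⟨S', ⟨E2'⟩, χ2⟩ := ih2 ψ2
      exact ⟨_, ⟨.closeR E1' E2'⟩, .nu (.par χ1 χ2)⟩
  | extrude E1 ih =>
    cases φ with
    | nu ψ =>
      obtain ⟨R', ⟨E'⟩, χ⟩ := ih ψ
      exact ⟨_, ⟨.extrude E'⟩, χ⟩
    | nuSwap Q => exact core (Tr.extrude E1)
    | nuSwapInv Q => exact coreInv (Tr.extrude E1)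
  | nuC E1 ih =>
    cases φ with
    | nu ψ =>
      obtain ⟨R', ⟨E'⟩, χ⟩ := ih ψ
      exact ⟨_, ⟨.nuC E'⟩, .nu χ⟩
    | nuSwap Q => exact core (Tr.nuC E1)
    | nuSwapInv Q => exact coreInv (Tr.nuC E1)
  | nuB E1 ih =>
    cases φ with
    | nu ψ =>
      obtain ⟨R', ⟨E'⟩, χ⟩ := ih ψ
      exact ⟨_, ⟨.nuB E'⟩, .nu (χ.renameBC swap)⟩
    | nuSwap Q => exact core (Tr.nuB E1)
    | nuSwapInv Q => exact coreInv (Tr.nuB E1)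
  | rep E1 ih =>
    cases φ with
    | rep ψ =>
      obtain ⟨R', ⟨E'⟩, χ⟩ := ih (.par ψ (.rep ψ))
      exact ⟨_, ⟨.rep E'⟩, χ⟩

open Relation in
theorem resChain {Γ ty} {P P' : Proc Γ} (h : ReflTransGen BC1 P P') {a : Act ty Γ}
    {R : Proc (ActTy.tgt ty Γ)} (E : Tr P a R) :
    ∃ R', Nonempty (Tr P' a R') ∧ ReflTransGen BC1 R R' := by
  induction h with
  | refl => exact ⟨R, ⟨E⟩, ReflTransGen.refl⟩
  | tail _ step ih =>
    obtain ⟨R1, ⟨E1⟩, c1⟩ := ih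
    obtain ⟨R', ⟨E'⟩, χ⟩ := resBC1 E1 step
    exact ⟨R', ⟨E'⟩, c1.tail χ⟩

/-- Residual of a transition and a coinitial braiding congruence: given `E : P ⟶a R`
and `φ : P ≅ P'`, there exist a process `R'`, a transition `E/φ : P' ⟶a R'` with the
same action `a`, and a braiding congruence `φ/E : R ≅ R'` (so that the square formed by
`E`, `φ`, `E/φ` and `φ/E` commutes). -/
theorem Tr.residual_bc {Γ : ℕ} {ty : ActTy} {P : Proc Γ} {a : Act ty Γ}
    {R : Proc (ActTy.tgt ty Γ)} {P' : Proc Γ} (E : Tr P a R) (φ : BC P P') :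
    ∃ R' : Proc (ActTy.tgt ty Γ), Nonempty (Tr P' a R') ∧ Nonempty (BC R R') := by
  obtain ⟨R', hT, hC⟩ := resChain (chain_of_BC φ) E
  exact ⟨R', hT, BC.ofChain hC⟩
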